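/- Let ℙ be a probability distribution on ℝ^d with ℙ(H) = 0 for every hyperplane H, let v_1,…,v_D be i.i.d. with law ℙ where D > d, and let w_1,…,w_D ∈ ℝ^d be fixed vectors, each equal to one of the fixed distinct points z_1,…,z_n. Then almost surely, every solution x ∈ ℝ^d of the system v_kᵀ x = v_kᵀ w_k for all k ∈ {1,…,D} satisfies x ∈ {z_1,…,z_n}. -/

import Mathlib

open MeasureTheory Matrix

section AuxLemmas

/-- sum of scaled rows is `vecMul`. -/
private lemma sum_smul_rows {k d : ℕ} (c : Fin k → ℝ) (A : Matrix (Fin k) (Fin d) ℝ) :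
    ∑ i, c i • A i = c ᵥ* A := by
  funext j
  simp [Matrix.vecMul, dotProduct, Finset.sum_apply]

/-- Gram determinant vanishes iff the rows are linearly dependent. -/
private lemma gram_det_eq_zero_iff {k d : ℕ} (A : Matrix (Fin k) (Fin d) ℝ) :
    (A * Aᵀ).det = 0 ↔ ¬ LinearIndependent ℝ (fun i => A i) := by
  have key : ∀ c : Fin k → ℝ, c ᵥ* (A * Aᵀ) = 0 ↔ c ᵥ* A = 0 := by
    intro c
    constructor
    · intro hc
      have h2 : (c ᵥ* A) ⬝ᵥ (c ᵥ* A) = 0 := by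
        calc (c ᵥ* A) ⬝ᵥ (c ᵥ* A) = (c ᵥ* A) ⬝ᵥ (Aᵀ *ᵥ c) := by rw [Matrix.mulVec_transpose]
        _ = ((c ᵥ* A) ᵥ* Aᵀ) ⬝ᵥ c := by rw [Matrix.dotProduct_mulVec]
        _ = (c ᵥ* (A * Aᵀ)) ⬝ᵥ c := by rw [Matrix.vecMul_vecMul]
        _ = 0 := by rw [hc, zero_dotProduct]
      exact dotProduct_self_eq_zero.mp h2
    · intro hc
      rw [← Matrix.vecMul_vecMul, hc, Matrix.zero_vecMul]
  rw [← Matrix.exists_vecMul_eq_zero_iff, Fintype.not_linearIndependent_iff]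
  constructor
  · rintro ⟨c, hc0, hc⟩
    refine ⟨c, ?_, ?_⟩
    · rw [sum_smul_rows, (key c).mp hc]
    · by_contra h
      push_neg at h
      exact hc0 (funext fun i => h i)
  · rintro ⟨c, hsum, i, hi⟩
    refine ⟨c, fun h => hi (by rw [h]; rfl), (key c).mpr ?_⟩
    rw [← sum_smul_rows]
    exact hsum

/-- Any proper submodule is `μ`-null if hyperplanes are. -/
private lemma null_of_ne_top {d : ℕ} (μ : Measure (Fin d → ℝ))
    (hμ : ∀ H : Submodule ℝ (Fin d → ℝ), Module.finrank ℝ H = d - 1 →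
      μ (H : Set (Fin d → ℝ)) = 0)
    (W : Submodule ℝ (Fin d → ℝ)) (hW : W ≠ ⊤) : μ (W : Set (Fin d → ℝ)) = 0 := by
  obtain ⟨f, hf0, hf⟩ :=
    W.exists_dual_map_eq_bot_of_lt_top (lt_top_iff_ne_top.mpr hW) inferInstance
  have hker : (W : Set (Fin d → ℝ)) ⊆ (LinearMap.ker f : Set (Fin d → ℝ)) := by
    intro x hx
    have hmem : f x ∈ W.map f := Submodule.mem_map_of_mem hx
    rw [hf, Submodule.mem_bot] at hmem
    simpa [LinearMap.mem_ker] using hmem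
  have hrange : Module.finrank ℝ (LinearMap.range f) = 1 := by
    have h1 : Module.finrank ℝ (LinearMap.range f) ≤ Module.finrank ℝ ℝ :=
      Submodule.finrank_le _
    rw [Module.finrank_self] at h1
    have h2 : Module.finrank ℝ (LinearMap.range f) ≠ 0 := by
      intro h
      rw [Submodule.finrank_eq_zero] at h
      exact hf0 (LinearMap.range_eq_bot.mp h)
    omega
  have hdim : Module.finrank ℝ (LinearMap.ker f) = d - 1 := by
    have := LinearMap.finrank_range_add_finrank_ker f
    rw [hrange, Module.finrank_fintype_fun_eq_card, Fintype.card_fin] at this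
    omega
  exact measure_mono_null hker (hμ _ hdim)

/-- Fubini-type lemma: a measurable set whose every slice in direction `k` is null, is null. -/
private lemma pi_null_of_slices_null {m : ℕ} {X : Type*} [MeasurableSpace X] [Nonempty X]
    (μ : Measure X) [IsProbabilityMeasure μ]
    (k : Fin (m + 1)) (S : Set (Fin (m + 1) → X)) (hS : MeasurableSet S)
    (h : ∀ v : Fin (m + 1) → X, μ {u | Function.update v k u ∈ S} = 0) :
    Measure.pi (fun _ : Fin (m + 1) => μ) S = 0 := by
  have hmp := measurePreserving_piFinSuccAbove (fun _ : Fin (m + 1) => μ) k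
  set e := MeasurableEquiv.piFinSuccAbove (fun _ : Fin (m + 1) => X) k with he
  have hS' : MeasurableSet (e.symm ⁻¹' S) := e.symm.measurable hS
  have h1 := (MeasurePreserving.symm e hmp).measure_preimage_equiv S
  rw [← h1, Measure.prod_apply_symm hS']
  have hsymm : ∀ (x : X) (y : Fin m → X), e.symm (x, y) = Fin.insertNth k x y := fun x y => rfl
  have key : ∀ (x : X) (y : Fin m → X),
      e.symm (x, y) = Function.update (e.symm (Classical.arbitrary X, y)) k x := by
    intro x y
    funext j
    rcases eq_or_ne j k with rfl | hj
    · rw [hsymm, Function.update_self, Fin.insertNth_apply_same]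
    · obtain ⟨j', rfl⟩ := Fin.exists_succAbove_eq hj
      rw [hsymm, hsymm, Function.update_of_ne (Fin.succAbove_ne _ _),
        Fin.insertNth_apply_succAbove, Fin.insertNth_apply_succAbove]
  have h2 : ∀ y : Fin m → X, μ ((fun x => (x, y)) ⁻¹' (e.symm ⁻¹' S)) = 0 := by
    intro y
    have hset : ((fun x => (x, y)) ⁻¹' (e.symm ⁻¹' S))
        = {u | Function.update (e.symm (Classical.arbitrary X, y)) k u ∈ S} := by
      ext x
      simp only [Set.mem_preimage, Set.mem_setOf_eq, ← key]
    rw [hset]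
    exact h _
  rw [lintegral_congr h2, lintegral_zero]

/-- The matrix whose rows are the first `k` of the `v`'s. -/
private def rmat (d D k : ℕ) (h : k ≤ D) (v : Fin D → Fin d → ℝ) :
    Matrix (Fin k) (Fin d) ℝ :=
  Matrix.of fun i j => v ⟨i.1, lt_of_lt_of_le i.isLt h⟩ j

private lemma rmat_update {d D k : ℕ} (h : k ≤ D) (v : Fin D → Fin d → ℝ)
    (κ : Fin D) (hκ : k ≤ κ.1) (u : Fin d → ℝ) :
    rmat d D k h (Function.update v κ u) = rmat d D k h v := by
  funext i j
  simp only [rmat, Matrix.of_apply]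
  rw [Function.update_of_ne]
  exact fun hEq => by
    have hv := congrArg Fin.val hEq
    simp only [Fin.val_mk] at hv
    omega

private lemma continuous_rmat {d D k : ℕ} (h : k ≤ D) : Continuous (rmat d D k h) :=
  continuous_pi fun i => continuous_pi fun j =>
    (continuous_apply j).comp (continuous_apply _)

private lemma rmat_update_rows {d D k : ℕ} (hk : k < D) (v : Fin D → Fin d → ℝ)
    (u : Fin d → ℝ) :
    (fun i : Fin (k + 1) => rmat d D (k + 1) hk (Function.update v ⟨k, hk⟩ u) i)
      = Fin.snoc (fun i : Fin k => rmat d D k hk.le v i) u := by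
  funext i
  refine Fin.lastCases ?_ ?_ i
  · rw [Fin.snoc_last]
    funext j
    simp only [rmat, Matrix.of_apply]
    have : (⟨(Fin.last k).1, lt_of_lt_of_le (Fin.last k).isLt hk⟩ : Fin D) = ⟨k, hk⟩ := rfl
    rw [this, Function.update_self]
  · intro i
    rw [Fin.snoc_castSucc]
    funext j
    simp only [rmat, Matrix.of_apply, Fin.coe_castSucc]
    rw [Function.update_of_ne]
    exact fun hEq => by
      have hv := congrArg Fin.val hEq
      simp only [Fin.val_mk, Fin.coe_castSucc] at hv
      omega

/-- Almost surely, the first `k ≤ d` vectors are linearly independent. -/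
private lemma gram_null (d D' : ℕ) (hD : d < D' + 1) (μ : Measure (Fin d → ℝ))
    [IsProbabilityMeasure μ]
    (hμ : ∀ H : Submodule ℝ (Fin d → ℝ), Module.finrank ℝ H = d - 1 →
      μ (H : Set (Fin d → ℝ)) = 0) :
    ∀ k (hk : k ≤ d),
      Measure.pi (fun _ : Fin (D' + 1) => μ)
        {v | ((rmat d (D' + 1) k (hk.trans hD.le) v)
            * (rmat d (D' + 1) k (hk.trans hD.le) v)ᵀ).det = 0} = 0 := by
  intro k
  induction k with
  | zero =>
    intro hk
    have hempty : {v : Fin (D' + 1) → Fin d → ℝ |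
        ((rmat d (D' + 1) 0 (by omega) v) * (rmat d (D' + 1) 0 (by omega) v)ᵀ).det = 0} = ∅ := by
      ext v
      simp [Matrix.det_fin_zero]
    rw [hempty, measure_empty]
  | succ k ih =>
    intro hk
    have hk' : k ≤ d := Nat.le_of_succ_le hk
    have hkD : k + 1 ≤ D' + 1 := hk.trans hD.le
    have hkD' : k < D' + 1 := hkD
    set κ : Fin (D' + 1) := ⟨k, hkD'⟩ with hκdef
    set Sk : Set (Fin (D' + 1) → Fin d → ℝ) :=
      {v | ((rmat d (D' + 1) k (hk'.trans hD.le) v)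
          * (rmat d (D' + 1) k (hk'.trans hD.le) v)ᵀ).det = 0} with hSk
    set Sk1 : Set (Fin (D' + 1) → Fin d → ℝ) :=
      {v | ((rmat d (D' + 1) (k + 1) (hk.trans hD.le) v)
          * (rmat d (D' + 1) (k + 1) (hk.trans hD.le) v)ᵀ).det = 0} with hSk1
    set T : Set (Fin (D' + 1) → Fin d → ℝ) := Skᶜ ∩ Sk1 with hT
    have hcontdet : ∀ (j : ℕ) (hj : j ≤ D' + 1), Continuous fun v : Fin (D' + 1) → Fin d → ℝ =>
        ((rmat d (D' + 1) j hj v) * (rmat d (D' + 1) j hj v)ᵀ).det :=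
      fun j hj => ((continuous_rmat hj).matrix_mul (continuous_rmat hj).matrix_transpose).matrix_det
    have hmSk : MeasurableSet Sk :=
      (hcontdet k _).measurable (measurableSet_singleton 0)
    have hmSk1 : MeasurableSet Sk1 :=
      (hcontdet (k + 1) _).measurable (measurableSet_singleton 0)
    have hTnull : Measure.pi (fun _ : Fin (D' + 1) => μ) T = 0 := by
      refine pi_null_of_slices_null μ κ T (hmSk.compl.inter hmSk1) ?_
      intro v
      by_cases hv : v ∈ Sk
      · refine measure_mono_null (fun u hu => ?_) measure_empty
        exfalso
        have h1 : Function.update v κ u ∈ Skᶜ := hu.1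
        apply h1
        show ((rmat d (D' + 1) k _ (Function.update v κ u))
            * (rmat d (D' + 1) k _ (Function.update v κ u))ᵀ).det = 0
        rw [rmat_update _ v κ (le_refl k) u]
        exact hv
      · have hind : LinearIndependent ℝ
            (fun i : Fin k => rmat d (D' + 1) k (hk'.trans hD.le) v i) := by
          by_contra hcon
          exact hv ((gram_det_eq_zero_iff _).mpr hcon)
        set W : Submodule ℝ (Fin d → ℝ) :=
          Submodule.span ℝ (Set.range fun i : Fin k => rmat d (D' + 1) k (hk'.trans hD.le) v i)
          with hWdef
        have hWle : Module.finrank ℝ W ≤ k := by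
          classical
          refine le_trans (finrank_span_le_card _) ?_
          rw [Set.toFinset_range]
          exact le_trans Finset.card_image_le (by simp)
        have hWne : W ≠ ⊤ := by
          intro htop
          have : Module.finrank ℝ W = d := by
            rw [htop, finrank_top, Module.finrank_fintype_fun_eq_card, Fintype.card_fin]
          omega
        refine measure_mono_null (fun u hu => ?_) (null_of_ne_top μ hμ W hWne)
        have h2 : Function.update v κ u ∈ Sk1 := hu.2
        have h3 : ¬ LinearIndependent ℝ
            (fun i : Fin (k + 1) => rmat d (D' + 1) (k + 1) (hk.trans hD.le)
              (Function.update v κ u) i) := by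
          intro hcon
          exact (gram_det_eq_zero_iff _).mp h2 hcon
        rw [rmat_update_rows hkD' v u] at h3
        rw [linearIndependent_fin_snoc] at h3
        push_neg at h3
        exact h3 hind
    have hsub : Sk1 ⊆ Sk ∪ T := by
      intro v hv
      by_cases h : v ∈ Sk
      · exact Or.inl h
      · exact Or.inr ⟨h, hv⟩
    exact measure_mono_null hsub (measure_union_null (ih hk') hTnull)

end AuxLemmas

/-- If `ℙ` gives zero mass to hyperplanes, `v_1,…,v_D` are i.i.d. of law `ℙ` with `D > d`,
and each `w_k` is one of the distinct points `z_1,…,z_n`, then almost surely every solution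
`x` of the overdetermined system `v_kᵀ x = v_kᵀ w_k` belongs to `{z_1,…,z_n}`. -/
theorem ae_overdetermined_solution_mem
    (d n D : ℕ) (hD : D > d)
    (μ : Measure (Fin d → ℝ)) [IsProbabilityMeasure μ]
    (hμ : ∀ H : Submodule ℝ (Fin d → ℝ), Module.finrank ℝ H = d - 1 → μ (H : Set (Fin d → ℝ)) = 0)
    (z : Fin n → (Fin d → ℝ)) (hz : Function.Injective z)
    (w : Fin D → (Fin d → ℝ)) (hw : ∀ k, ∃ l, w k = z l) :
    (Measure.pi fun _ : Fin D => μ)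
      {v : Fin D → (Fin d → ℝ) |
        ∀ x : Fin d → ℝ, (∀ k, v k ⬝ᵥ x = v k ⬝ᵥ w k) → ∃ l, x = z l} = 1 := by
  classical
  rcases Nat.eq_zero_or_pos d with hd0 | hd
  · -- trivial case `d = 0`
    subst hd0
    obtain ⟨l, -⟩ := hw ⟨0, hD⟩
    have huniv : {v : Fin D → (Fin 0 → ℝ) |
        ∀ x : Fin 0 → ℝ, (∀ k, v k ⬝ᵥ x = v k ⬝ᵥ w k) → ∃ l, x = z l} = Set.univ := by
      refine Set.eq_univ_of_forall fun v x _ => ⟨l, ?_⟩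
      exact Subsingleton.elim _ _
    rw [huniv]
    exact measure_univ
  obtain ⟨D', rfl⟩ : ∃ D', D = D' + 1 := ⟨D - 1, by omega⟩
  set P := Measure.pi (fun _ : Fin (D' + 1) => μ) with hP
  have hdD : d ≤ D' + 1 := hD.le
  set ι : Fin d → Fin (D' + 1) := fun i => ⟨i.1, lt_of_lt_of_le i.isLt hdD⟩ with hι
  set M : (Fin (D' + 1) → Fin d → ℝ) → Matrix (Fin d) (Fin d) ℝ :=
    fun v => rmat d (D' + 1) d hdD v with hM
  set b : (Fin (D' + 1) → Fin d → ℝ) → Fin d → ℝ :=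
    fun v i => v (ι i) ⬝ᵥ w (ι i) with hb
  set sol : (Fin (D' + 1) → Fin d → ℝ) → Fin d → ℝ := fun v => (M v)⁻¹ *ᵥ b v with hsoldef
  set κ : Fin (D' + 1) := ⟨d, hD⟩ with hκ
  -- continuity / measurability facts
  have hcontM : Continuous M := continuous_rmat hdD
  have hcontdet : Continuous fun v => (M v).det := hcontM.matrix_det
  have hcontb : Continuous b := by
    refine continuous_pi fun i => ?_
    have : Continuous fun v : Fin (D' + 1) → Fin d → ℝ => v (ι i) := continuous_apply _
    exact this.dotProduct continuous_const
  have hsol_eq : sol = fun v => ((M v).det)⁻¹ • ((M v).adjugate *ᵥ b v) := by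
    funext v
    rw [hsoldef]
    simp only
    rw [Matrix.inv_def, Ring.inverse_eq_inv, Matrix.smul_mulVec]
  have hsolm : Measurable sol := by
    rw [hsol_eq]
    refine measurable_pi_iff.2 fun j => ?_
    simp only [Pi.smul_apply, smul_eq_mul]
    exact (hcontdet.measurable.inv).mul
      ((continuous_apply j).comp (hcontM.matrix_adjugate.matrix_mulVec hcontb)).measurable
  -- the two bad events
  set N1 : Set (Fin (D' + 1) → Fin d → ℝ) := {v | (M v * (M v)ᵀ).det = 0} with hN1def
  set N2 : Set (Fin (D' + 1) → Fin d → ℝ) :=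
    {v | (M v).det ≠ 0 ∧ (∀ l, sol v ≠ z l) ∧ v κ ⬝ᵥ sol v = v κ ⬝ᵥ w κ} with hN2def
  have hN1 : P N1 = 0 := gram_null d D' hD μ hμ d le_rfl
  have hmN2 : MeasurableSet N2 := by
    have h1 : MeasurableSet {v : Fin (D' + 1) → Fin d → ℝ | (M v).det ≠ 0} :=
      (hcontdet.measurable (measurableSet_singleton 0)).compl
    have h2 : MeasurableSet {v : Fin (D' + 1) → Fin d → ℝ | ∀ l, sol v ≠ z l} := by
      rw [Set.setOf_forall]
      exact MeasurableSet.iInter fun l => (hsolm (measurableSet_singleton (z l))).compl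
    have h3 : MeasurableSet {v : Fin (D' + 1) → Fin d → ℝ | v κ ⬝ᵥ sol v = v κ ⬝ᵥ w κ} := by
      have hg : Measurable fun v : Fin (D' + 1) → Fin d → ℝ =>
          v κ ⬝ᵥ sol v - v κ ⬝ᵥ w κ := by
        refine Measurable.sub ?_ ?_
        · unfold dotProduct
          refine Finset.measurable_sum _ fun j _ => ?_
          exact ((continuous_apply j).comp (continuous_apply κ)).measurable.mul
            ((measurable_pi_apply j).comp hsolm)
        · exact ((continuous_apply κ).dotProduct continuous_const).measurable
      have : {v : Fin (D' + 1) → Fin d → ℝ | v κ ⬝ᵥ sol v = v κ ⬝ᵥ w κ}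
          = (fun v => v κ ⬝ᵥ sol v - v κ ⬝ᵥ w κ) ⁻¹' {0} := by
        ext v
        simp [sub_eq_zero]
      rw [this]
      exact hg (measurableSet_singleton 0)
    have : N2 = {v | (M v).det ≠ 0} ∩ ({v | ∀ l, sol v ≠ z l}
        ∩ {v | v κ ⬝ᵥ sol v = v κ ⬝ᵥ w κ}) := by
      ext v
      simp only [hN2def, Set.mem_setOf_eq, Set.mem_inter_iff]
    rw [this]
    exact h1.inter (h2.inter h3)
  have hN2 : P N2 = 0 := by
    refine pi_null_of_slices_null μ κ N2 hmN2 ?_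
    intro v
    have hMup : ∀ u, M (Function.update v κ u) = M v :=
      fun u => rmat_update hdD v κ le_rfl u
    have hbup : ∀ u, b (Function.update v κ u) = b v := by
      intro u
      funext i
      simp only [hb]
      rw [Function.update_of_ne]
      exact fun hEq => by
        have hv := congrArg Fin.val hEq
        simp only [hι, hκ, Fin.val_mk] at hv
        omega
    have hsolup : ∀ u, sol (Function.update v κ u) = sol v := by
      intro u
      simp only [hsoldef, hMup, hbup]
    by_cases hcond : (M v).det ≠ 0 ∧ (∀ l, sol v ≠ z l)
    · obtain ⟨l, hl⟩ := hw κ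
      have hc : sol v - w κ ≠ 0 := by
        intro h0
        have h0' : sol v = w κ := sub_eq_zero.mp h0
        rw [hl] at h0'
        exact hcond.2 l h0'
      set c : Fin d → ℝ := sol v - w κ with hcdef
      set f : (Fin d → ℝ) →ₗ[ℝ] ℝ :=
        { toFun := fun x => x ⬝ᵥ c
          map_add' := fun x y => add_dotProduct x y c
          map_smul' := fun r x => smul_dotProduct r x c } with hfdef
      have hker : (LinearMap.ker f : Submodule ℝ (Fin d → ℝ)) ≠ ⊤ := by
        intro htop
        have hcmem : c ∈ LinearMap.ker f := htop ▸ Submodule.mem_top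
        have : c ⬝ᵥ c = 0 := hcmem
        exact hc (dotProduct_self_eq_zero.mp this)
      refine measure_mono_null (fun u hu => ?_) (null_of_ne_top μ hμ _ hker)
      have h3 : Function.update v κ u κ ⬝ᵥ sol (Function.update v κ u)
          = Function.update v κ u κ ⬝ᵥ w κ := hu.2.2
      rw [Function.update_self, hsolup] at h3
      show u ⬝ᵥ c = 0
      rw [hcdef, dotProduct_sub, h3, sub_self]
    · refine measure_mono_null (fun u hu => ?_) measure_empty
      exfalso
      refine hcond ⟨?_, ?_⟩
      · have := hu.1
        rwa [hMup] at this
      · have := hu.2.1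
        intro l'
        have h' := this l'
        rwa [hsolup] at h'
  -- the good set contains the complement of `N1 ∪ N2`
  set S : Set (Fin (D' + 1) → Fin d → ℝ) :=
    {v | ∀ x : Fin d → ℝ, (∀ k, v k ⬝ᵥ x = v k ⬝ᵥ w k) → ∃ l, x = z l} with hS
  have hsub : Sᶜ ⊆ N1 ∪ N2 := by
    intro v hv
    simp only [hS, Set.mem_compl_iff, Set.mem_setOf_eq] at hv
    push_neg at hv
    obtain ⟨x, hx, hxz⟩ := hv
    by_cases hdet : (M v * (M v)ᵀ).det = 0
    · exact Or.inl hdet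
    · have hdet' : (M v).det ≠ 0 := by
        intro h0
        exact hdet (by rw [Matrix.det_mul, Matrix.det_transpose, h0, zero_mul])
      have hMx : M v *ᵥ x = b v := by
        funext i
        exact hx (ι i)
      have hxsol : sol v = x := by
        rw [hsoldef]
        simp only
        rw [← hMx, Matrix.mulVec_mulVec, Matrix.nonsing_inv_mul _ (isUnit_iff_ne_zero.2 hdet'),
          Matrix.one_mulVec]
      refine Or.inr ⟨hdet', ?_, ?_⟩
      · intro l hl
        rw [hxsol] at hl
        exact hxz l hl
      · rw [hxsol]
        exact hx κ
  have hScnull : P Sᶜ = 0 :=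
    measure_mono_null hsub (measure_union_null hN1 hN2)
  have hge : 1 ≤ P S := by
    have h1 : P Set.univ ≤ P S + P Sᶜ := by
      have := measure_union_le (μ := P) S Sᶜ
      rwa [Set.union_compl_self] at this
    rw [measure_univ, hScnull, add_zero] at h1
    exact h1
  exact le_antisymm prob_le_one hge
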